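/- Let a, b be natural numbers with gcd(10a, b) = 1 and a < b, and let e be the multiplicative order of 10 modulo b. Suppose e = l·n for natural numbers n > 1 and l. Define L = gcd(10^l - 1, b) and B = b/L. For i = 0, ..., n-1 let s_i be the natural number with s_i ≡ 10^{l·i}·a (mod b) and 0 ≤ s_i < b. Then B divides the sum s_0 + s_1 + ... + s_{n-1}. -/

import Mathlib

theorem stmt_0 (a b n l : ℕ) (hgcd : Nat.gcd (10 * a) b = 1) (hab : a < b)
    (hn : 1 < n) (he : orderOf (10 : ZMod b) = l * n) :
    (b / Nat.gcd (10 ^ l - 1) b) ∣ ∑ i ∈ Finset.range n, (10 ^ (l * i) * a) % b := by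
  have hb : b ≠ 0 := by
    intro h; subst h; simp at hgcd
  haveI : NeZero b := ⟨hb⟩
  rcases Nat.eq_zero_or_pos l with hl | hl
  · subst hl
    simp [Nat.div_self (Nat.pos_of_ne_zero hb)]
  set L := Nat.gcd (10 ^ l - 1) b with hL
  set S := ∑ i ∈ Finset.range n, (10 ^ (l * i) * a) % b with hS
  have h10 : (1:ℕ) ≤ 10 ^ l := Nat.one_le_pow _ _ (by norm_num)
  have hbdvd : b ∣ (10 ^ l - 1) * S := by
    have hz : ((((10 ^ l - 1) * S : ℕ)) : ZMod b) = 0 := by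
      push_cast [Nat.cast_sub h10, hS, ZMod.natCast_mod]
      have hx : ∀ i, ((10:ZMod b) ^ (l * i)) = ((10:ZMod b)^l)^i := by
        intro i; rw [← pow_mul]
      simp_rw [hx]
      rw [← Finset.sum_mul, ← mul_assoc, mul_comm ((10:ZMod b)^l - 1),
        geom_sum_mul]
      have : ((10:ZMod b)^l)^n = 1 := by
        rw [← pow_mul, ← he, pow_orderOf_eq_one]
      rw [this]
      ring
    exact (ZMod.natCast_eq_zero_iff _ _).mp hz
  have hLpos : 0 < L := Nat.gcd_pos_of_pos_right _ (Nat.pos_of_ne_zero hb)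
  have hLd1 : L ∣ 10 ^ l - 1 := Nat.gcd_dvd_left _ _
  have hLdb : L ∣ b := Nat.gcd_dvd_right _ _
  have key : (b / L) ∣ ((10 ^ l - 1) / L) * S := by
    have : (b / L) * L ∣ (((10 ^ l - 1) / L) * S) * L := by
      rw [Nat.div_mul_cancel hLdb, mul_right_comm, Nat.div_mul_cancel hLd1]
      exact hbdvd
    exact (Nat.mul_dvd_mul_iff_right hLpos).mp this
  have hcop : Nat.Coprime (b / L) ((10 ^ l - 1) / L) := by
    have := Nat.coprime_div_gcd_div_gcd (m := 10 ^ l - 1) (n := b) hLpos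
    exact this.symm
  exact hcop.dvd_of_dvd_mul_left key
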